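/- Epoch descent lemma: suppose $f = \frac{1}{n}\sum_{i=1}^n f_i$ is $L$-smooth and each $f_i$ is $L_i$-smooth with $L_{\max} = \max_i L_i$. Given a permutation $\pi$ of $\{1,\ldots,n\}$ and iterates $x_{j+1} = x_j - \eta \nabla f_{\pi(j+1)}(x_j)$ for $j = 0,\ldots,n-1$ with constant step size $\eta \leq \frac{1}{nL}$, it holds that $f(x_n) \leq f(x_0) - \frac{n\eta}{2}\|\nabla f(x_0)\|^2 + \frac{L_{\max}^2 \eta}{2}\sum_{i=0}^n \|x_i - x_0\|^2$. -/

import Mathlib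

set_option maxHeartbeats 1000000
open RealInnerProductSpace

noncomputable section
variable {d : ℕ}
local notation "E" => EuclideanSpace ℝ (Fin d)

lemma line_deriv (F : E → ℝ) (hd : Differentiable ℝ F) (x v : E) (t : ℝ) :
    HasDerivAt (fun s : ℝ => F (x + s • v)) ⟪gradient F (x + t • v), v⟫ t := by
  have h1 : HasDerivAt (fun s : ℝ => x + s • v) v t := by
    simpa using ((hasDerivAt_id t).smul_const v).const_add x
  have h2 : HasFDerivAt F (InnerProductSpace.toDual ℝ _ (gradient F (x + t • v))) (x + t • v) :=
    hasGradientAt_iff_hasFDerivAt.mp (hd (x + t • v)).hasGradientAt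
  have := h2.comp_hasDerivAt t h1
  simpa [InnerProductSpace.toDual_apply_apply, Function.comp_def] using this

lemma grad_cont (F : E → ℝ) (L : ℝ) (hL : 0 ≤ L)
    (hs : ∀ x y : E, ‖gradient F x - gradient F y‖ ≤ L * ‖x - y‖) :
    Continuous (gradient F) := by
  have : LipschitzWith L.toNNReal (gradient F) := by
    apply LipschitzWith.of_dist_le_mul
    intro a b
    simpa [dist_eq_norm, Real.coe_toNNReal L hL] using hs a b
  exact this.continuous

lemma descent (F : E → ℝ) (hd : Differentiable ℝ F) (L : ℝ) (hL : 0 ≤ L)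
    (hs : ∀ x y : E, ‖gradient F x - gradient F y‖ ≤ L * ‖x - y‖) (x y : E) :
    F y ≤ F x + ⟪gradient F x, y - x⟫ + L / 2 * ‖y - x‖ ^ 2 := by
  set v := y - x with hv
  have hxy : y = x + (1 : ℝ) • v := by simp [hv]
  set φ' : ℝ → ℝ := fun t => ⟪gradient F (x + t • v), v⟫ with hφ'
  have hderiv : ∀ t ∈ Set.uIcc (0:ℝ) 1, HasDerivAt (fun s : ℝ => F (x + s • v)) (φ' t) t :=
    fun t _ => line_deriv F hd x v t
  have hcont : Continuous φ' := by
    apply Continuous.inner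
    · exact (grad_cont F L hL hs).comp (continuous_const.add (continuous_id.smul continuous_const))
    · exact continuous_const
  have hint : IntervalIntegrable φ' MeasureTheory.volume 0 1 :=
    hcont.intervalIntegrable 0 1
  have key : ∫ t in (0:ℝ)..1, φ' t = F (x + (1:ℝ) • v) - F (x + (0:ℝ) • v) :=
    intervalIntegral.integral_eq_sub_of_hasDerivAt hderiv hint
  have hb : ∀ t ∈ Set.Icc (0:ℝ) 1, φ' t ≤ φ' 0 + L * ‖v‖ ^ 2 * t := by
    intro t ht
    have h1 : φ' t - φ' 0 = ⟪gradient F (x + t • v) - gradient F x, v⟫ := by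
      simp [hφ', inner_sub_left]
    have h2 : ⟪gradient F (x + t • v) - gradient F x, v⟫ ≤
        ‖gradient F (x + t • v) - gradient F x‖ * ‖v‖ := real_inner_le_norm _ _
    have h3 : ‖gradient F (x + t • v) - gradient F x‖ ≤ L * (t * ‖v‖) := by
      have := hs (x + t • v) x
      simpa [norm_smul, abs_of_nonneg ht.1] using this
    nlinarith [norm_nonneg v, mul_le_mul_of_nonneg_right h3 (norm_nonneg v)]
  have hmono : ∫ t in (0:ℝ)..1, φ' t ≤ ∫ t in (0:ℝ)..1, (φ' 0 + L * ‖v‖ ^ 2 * t) := by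
    apply intervalIntegral.integral_mono_on (by norm_num) hint
    · exact ((continuous_const.add (continuous_const.mul continuous_id)).intervalIntegrable 0 1)
    · exact hb
  have hval : ∫ t in (0:ℝ)..1, (φ' 0 + L * ‖v‖ ^ 2 * t) = φ' 0 + L * ‖v‖ ^ 2 / 2 := by
    have hInt2 : IntervalIntegrable (fun t : ℝ => L * ‖v‖ ^ 2 * t) MeasureTheory.volume 0 1 :=
      (continuous_const.mul continuous_id).intervalIntegrable 0 1
    rw [intervalIntegral.integral_add intervalIntegrable_const hInt2,
      intervalIntegral.integral_const_mul, integral_id]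
    simp
    ring
  have h0 : φ' 0 = ⟪gradient F x, y - x⟫ := by simp [hφ', hv]
  rw [hval] at hmono
  rw [key] at hmono
  simp only [one_smul, zero_smul, add_zero] at hmono
  rw [h0] at hmono
  have : x + v = y := by simp [hv]
  rw [this] at hmono
  linarith

lemma grad_sum {n : ℕ} (f : Fin n → E → ℝ) (hdiff : ∀ i, Differentiable ℝ (f i))
    (c : ℝ) (x : E) :
    gradient (fun y => c * ∑ i, f i y) x = c • ∑ i, gradient (f i) x := by
  have h1 : ∀ i : Fin n, HasFDerivAt (f i)
      (InnerProductSpace.toDual ℝ _ (gradient (f i) x)) x :=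
    fun i => hasGradientAt_iff_hasFDerivAt.mp (hdiff i x).hasGradientAt
  have h2 : HasFDerivAt (fun y => ∑ i, f i y)
      (∑ i, InnerProductSpace.toDual ℝ _ (gradient (f i) x)) x :=
    HasFDerivAt.fun_sum (fun i _ => h1 i)
  have h3 : HasFDerivAt (fun y => c * ∑ i, f i y)
      (c • ∑ i, InnerProductSpace.toDual ℝ _ (gradient (f i) x)) x := h2.const_mul c
  have h4 : (c • ∑ i, InnerProductSpace.toDual ℝ _ (gradient (f i) x)) =
      InnerProductSpace.toDual ℝ _ (c • ∑ i, gradient (f i) x) := by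
    rw [map_smul, map_sum]
  rw [h4] at h3
  exact (hasGradientAt_iff_hasFDerivAt.mpr h3).gradient


end

noncomputable section
lemma aux_heq (n η L s2 : ℝ) (hn : n ≠ 0) :
    η / (2 * n) * s2 - L / 2 * (η ^ 2 * s2) = s2 * (η / 2) * (1 / n - L * η) := by
  field_simp

lemma aux_h6 (Fx0 n η a b c : ℝ) (hn : n ≠ 0) :
    Fx0 + -(η * (n * a + b)) + η / (2 * n) * (n ^ 2 * a + 2 * n * b + c)
      = Fx0 - (n * η / 2) * a + η / (2 * n) * c := by
  field_simp
  ring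

lemma aux_h8 (n η Lmax S1 : ℝ) (hn : n ≠ 0) :
    η / (2 * n) * (Lmax ^ 2 * n * S1) = Lmax ^ 2 * η / 2 * S1 := by
  field_simp


/-- Epoch descent lemma: one pass over the data in the order given by a
permutation `π`, with constant step size `η ≤ 1/(nL)`, decreases the objective
up to a term controlled by the within-epoch deviations. -/
theorem epoch_descent_lemma
    (d n : ℕ) (hn : 0 < n)
    (f : Fin n → EuclideanSpace ℝ (Fin d) → ℝ)
    (hdiff : ∀ i, Differentiable ℝ (f i))
    (F : EuclideanSpace ℝ (Fin d) → ℝ)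
    (hF : F = fun x => (n : ℝ)⁻¹ * ∑ i, f i x)
    (L Lmax : ℝ) (hL : 0 < L) (hLmax : L ≤ Lmax)
    (hsmooth : ∀ x y : EuclideanSpace ℝ (Fin d),
      ‖gradient F x - gradient F y‖ ≤ L * ‖x - y‖)
    (hsmooth_i : ∀ i, ∀ x y : EuclideanSpace ℝ (Fin d),
      ‖gradient (f i) x - gradient (f i) y‖ ≤ Lmax * ‖x - y‖)
    (π : Equiv.Perm (Fin n))
    (η : ℝ) (hη0 : 0 < η) (hη : η ≤ 1 / (n * L))
    (x : ℕ → EuclideanSpace ℝ (Fin d))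
    (hstep : ∀ j (h : j < n), x (j + 1) = x j - η • gradient (f (π ⟨j, h⟩)) (x j)) :
    F (x n) ≤ F (x 0) - (n * η / 2) * ‖gradient F (x 0)‖ ^ 2
      + (Lmax ^ 2 * η / 2) * ∑ i ∈ Finset.range (n + 1), ‖x i - x 0‖ ^ 2 := by
  have hn' : (0:ℝ) < n := Nat.cast_pos.mpr hn
  have hLmax0 : (0:ℝ) ≤ Lmax := le_trans hL.le hLmax
  have hdF : Differentiable ℝ F := by
    rw [hF]
    exact Differentiable.const_mul (Differentiable.fun_sum fun i _ => hdiff i) _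
  set G : ℕ → EuclideanSpace ℝ (Fin d) :=
    fun j => if h : j < n then gradient (f (π ⟨j, h⟩)) (x j) else 0 with hG
  -- iterate formula
  have hx : ∀ k, k ≤ n → x k = x 0 - η • ∑ j ∈ Finset.range k, G j := by
    intro k
    induction k with
    | zero => intro _; simp
    | succ k ih =>
      intro hk
      have hkn : k < n := lt_of_lt_of_le (Nat.lt_succ_self k) hk
      have hGk : G k = gradient (f (π ⟨k, hkn⟩)) (x k) := by simp [hG, hkn]
      rw [hstep k hkn, ← hGk, ih hkn.le, Finset.sum_range_succ, smul_add]
      abel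
  set S := ∑ j ∈ Finset.range n, G j with hS
  have hxn : x n - x 0 = -(η • S) := by rw [hx n le_rfl]; abel
  set G₀ := gradient F (x 0) with hG₀
  -- gradient decomposition
  have hgradsum : (n:ℝ) • G₀ = ∑ i, gradient (f i) (x 0) := by
    rw [hG₀, hF, grad_sum f hdiff _ (x 0), smul_inv_smul₀ (ne_of_gt hn')]
  have hSfin : S = ∑ j : Fin n, gradient (f (π j)) (x j) := by
    rw [hS, Finset.sum_range fun j => G j]
    apply Finset.sum_congr rfl
    intro j _
    simp [hG, j.isLt]
  set E₀ := S - (n:ℝ) • G₀ with hE₀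
  have hEeq : E₀ = ∑ j : Fin n, (gradient (f (π j)) (x j) - gradient (f (π j)) (x 0)) := by
    rw [hE₀, hSfin, hgradsum, ← Equiv.sum_comp π (fun i => gradient (f i) (x 0)),
      Finset.sum_sub_distrib]
  -- bound on ‖E₀‖²
  set Sig1 := ∑ j : Fin n, ‖x (j:ℕ) - x 0‖ ^ 2 with hSig1
  have hEbound : ‖E₀‖ ^ 2 ≤ Lmax ^ 2 * n * Sig1 := by
    have h1 : ‖E₀‖ ≤ Lmax * ∑ j : Fin n, ‖x (j:ℕ) - x 0‖ := by
      rw [hEeq, Finset.mul_sum]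
      exact le_trans (norm_sum_le _ _) (Finset.sum_le_sum fun j _ => hsmooth_i (π j) _ _)
    have h2 : (∑ j : Fin n, ‖x (j:ℕ) - x 0‖) ^ 2 ≤ n * Sig1 := by
      have := sq_sum_le_card_mul_sum_sq (s := (Finset.univ : Finset (Fin n)))
        (f := fun j : Fin n => ‖x (j:ℕ) - x 0‖)
      simpa [hSig1] using this
    have h3 : ‖E₀‖ ^ 2 ≤ (Lmax * ∑ j : Fin n, ‖x (j:ℕ) - x 0‖) ^ 2 := by
      apply sq_le_sq' _ h1
      have : (0:ℝ) ≤ Lmax * ∑ j : Fin n, ‖x (j:ℕ) - x 0‖ :=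
        mul_nonneg hLmax0 (Finset.sum_nonneg fun _ _ => norm_nonneg _)
      linarith [norm_nonneg E₀]
    calc ‖E₀‖ ^ 2 ≤ (Lmax * ∑ j : Fin n, ‖x (j:ℕ) - x 0‖) ^ 2 := h3
      _ = Lmax ^ 2 * (∑ j : Fin n, ‖x (j:ℕ) - x 0‖) ^ 2 := by ring
      _ ≤ Lmax ^ 2 * (n * Sig1) := by
          exact mul_le_mul_of_nonneg_left h2 (by positivity)
      _ = Lmax ^ 2 * n * Sig1 := by ring
  -- descent lemma
  have hdesc := descent F hdF L hL.le hsmooth (x 0) (x n)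
  rw [hxn] at hdesc
  -- expansions
  have hSdecomp : S = (n:ℝ) • G₀ + E₀ := by rw [hE₀]; abel
  set a := ‖G₀‖ ^ 2 with ha
  set b := ⟪G₀, E₀⟫ with hb
  set c := ‖E₀‖ ^ 2 with hc
  have hinner : ⟪G₀, -(η • S)⟫ = -(η * ((n:ℝ) * a + b)) := by
    rw [inner_neg_right, real_inner_smul_right, hSdecomp, inner_add_right,
      real_inner_smul_right, real_inner_self_eq_norm_sq]
  have hS2norm : ‖S‖ ^ 2 = (n:ℝ)^2 * a + 2 * (n:ℝ) * b + c := by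
    rw [hSdecomp, norm_add_sq_real, real_inner_smul_left, norm_smul, Real.norm_eq_abs,
      abs_of_nonneg hn'.le, ha, hb, hc, mul_pow]
    ring
  set s2 := (n:ℝ)^2 * a + 2 * (n:ℝ) * b + c with hs2def
  have hnsq : ‖-(η • S)‖ ^ 2 = η ^ 2 * s2 := by
    rw [norm_neg, norm_smul, mul_pow, Real.norm_eq_abs, sq_abs, hS2norm]
  rw [hinner, hnsq] at hdesc
  -- step size
  have hstepsize : η * ((n:ℝ) * L) ≤ 1 := (le_div_iff₀ (mul_pos hn' hL)).mp hη
  have hLη : L * η ≤ 1 / (n:ℝ) := by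
    rw [le_div_iff₀ hn']
    nlinarith [hstepsize]
  have hs2 : 0 ≤ s2 := by
    rw [← hS2norm]; positivity
  clear_value s2 c b a Sig1 E₀ S G₀ G
  have h5 : L / 2 * (η ^ 2 * s2) ≤ η / (2 * n) * s2 := by
    have key : 0 ≤ s2 * (η / 2) * (1 / (n:ℝ) - L * η) :=
      mul_nonneg (mul_nonneg hs2 (by linarith)) (by linarith)
    have heq := aux_heq (n:ℝ) η L s2 hn'.ne'
    linarith
  have h6 : F (x 0) + -(η * ((n:ℝ) * a + b)) + η / (2 * n) * s2
      = F (x 0) - ((n:ℝ) * η / 2) * a + η / (2 * n) * c := by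
    rw [hs2def]
    exact aux_h6 (F (x 0)) (n:ℝ) η a b c hn'.ne'
  -- sum bound
  set Sig2 := ∑ i ∈ Finset.range (n + 1), ‖x i - x 0‖ ^ 2 with hSig2
  have hSig : Sig1 ≤ Sig2 := by
    rw [hSig1, hSig2, Fin.sum_univ_eq_sum_range (fun j => ‖x j - x 0‖ ^ 2)]
    exact Finset.sum_le_sum_of_subset_of_nonneg
      (Finset.range_subset_range.mpr (Nat.le_succ n)) (fun _ _ _ => by positivity)
  have hckey : η / (2 * n) * c ≤ Lmax ^ 2 * η / 2 * Sig2 := by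
    have h7 : η / (2 * n) * c ≤ η / (2 * n) * (Lmax ^ 2 * n * Sig1) :=
      mul_le_mul_of_nonneg_left hEbound (by positivity)
    have h8 := aux_h8 (n:ℝ) η Lmax Sig1 hn'.ne'
    have h9 : Lmax ^ 2 * η / 2 * Sig1 ≤ Lmax ^ 2 * η / 2 * Sig2 :=
      mul_le_mul_of_nonneg_left hSig (by positivity)
    linarith
  linarith [hdesc, h5, h6, hckey]
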